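/- Let V be a finite-dimensional complex inner product space, let H₁ and H₂ be self-adjoint linear operators on V, and let L ⊆ V be a nonzero subspace. Assume: (i) H₂ v = 0 for every v ∈ L; (ii) there is a real δ with ⟪v, H₂ v⟫ ≥ δ·‖v‖² for every v in the orthogonal complement L⊥; (iii) δ > 2·‖H₁‖, where ‖H₁‖ is the operator norm of H₁; and (iv) L is invariant under H₁ (H₁ maps L into L). Then the smallest eigenvalue of H₁ + H₂ equals the minimum of the Rayleigh quotient ⟪v, H₁ v⟫ over unit vectors v ∈ L, i.e. λ(H₁ + H₂) = λ(H₁|_L). -/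

import Mathlib

open scoped ComplexConjugate

/-- The infimum of the Rayleigh quotient `re ⟪v, A v⟫` of the operator `A` over
unit vectors `v` in the set `S`.  For a self-adjoint operator on a nonzero
finite-dimensional complex inner ℂ product space and `S = Set.univ`, this is the
smallest eigenvalue `λ(A)`; for a subspace `S = L`, this is `λ(A|_L)`. -/
noncomputable def rayleighInf {V : Type*} [NormedAddCommGroup V] [InnerProductSpace ℂ V]
    (A : V →L[ℂ] V) (S : Set V) : ℝ :=
  sInf ((fun v => (inner ℂ v (A v) : ℂ).re) '' {v | v ∈ S ∧ ‖v‖ = 1})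

/-- Projection lemma with strict equality (Lemma 1 of the paper). -/
theorem projection_lemma_strict_equality
    {V : Type*} [NormedAddCommGroup V] [InnerProductSpace ℂ V] [FiniteDimensional ℂ V]
    (H₁ H₂ : V →L[ℂ] V) (hH₁ : IsSelfAdjoint H₁) (hH₂ : IsSelfAdjoint H₂)
    (L : Submodule ℂ V) (hL : L ≠ ⊥)
    (hker : ∀ v ∈ L, H₂ v = 0)
    (δ : ℝ)
    (hgap : ∀ v ∈ Lᗮ, δ * ‖v‖ ^ 2 ≤ (inner ℂ v (H₂ v) : ℂ).re)
    (hδ : 2 * ‖H₁‖ < δ)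
    (hinv : ∀ v ∈ L, H₁ v ∈ L) :
    rayleighInf (H₁ + H₂) Set.univ = rayleighInf H₁ (L : Set V) := by
  classical
  -- a generic Rayleigh-quotient bound
  have habs : ∀ (A : V →L[ℂ] V) (v : V), |(inner ℂ v (A v) : ℂ).re| ≤ ‖A‖ * ‖v‖ ^ 2 := by
    intro A v
    calc |(inner ℂ v (A v) : ℂ).re| ≤ ‖(inner ℂ v (A v) : ℂ)‖ := Complex.abs_re_le_norm _
      _ ≤ ‖v‖ * ‖A v‖ := norm_inner_le_norm _ _
      _ ≤ ‖v‖ * (‖A‖ * ‖v‖) := by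
          have := A.le_opNorm v
          have : ‖v‖ * ‖A v‖ ≤ ‖v‖ * (‖A‖ * ‖v‖) := by
            exact mul_le_mul_of_nonneg_left this (norm_nonneg v)
          exact this
      _ = ‖A‖ * ‖v‖ ^ 2 := by ring
  -- a unit vector in L
  obtain ⟨x, hxL, hx0⟩ := L.ne_bot_iff.mp hL
  have hxn : (0:ℝ) < ‖x‖ := norm_pos_iff.mpr hx0
  set u : V := (‖x‖⁻¹ : ℂ) • x with hu_def
  have huL : u ∈ L := L.smul_mem _ hxL
  have hu1 : ‖u‖ = 1 := by
    simp [hu_def, norm_smul, hxn.ne']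
  set SA : Set ℝ := (fun v => (inner ℂ v ((H₁ + H₂) v) : ℂ).re) '' {v | v ∈ Set.univ ∧ ‖v‖ = 1}
    with hSA
  set SL : Set ℝ := (fun v => (inner ℂ v (H₁ v) : ℂ).re) '' {v | v ∈ (L : Set V) ∧ ‖v‖ = 1}
    with hSL
  have hneSL : SL.Nonempty := ⟨_, ⟨u, ⟨huL, hu1⟩, rfl⟩⟩
  have hneSA : SA.Nonempty := ⟨_, ⟨u, ⟨trivial, hu1⟩, rfl⟩⟩
  have hbddSA : BddBelow SA := by
    refine ⟨-‖H₁ + H₂‖, ?_⟩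
    rintro a ⟨v, ⟨-, hv⟩, rfl⟩
    have := habs (H₁ + H₂) v
    rw [hv] at this
    simp only [one_pow, mul_one] at this
    linarith [neg_abs_le ((inner ℂ v ((H₁ + H₂) v) : ℂ).re)]
  have hbddSL : BddBelow SL := by
    refine ⟨-‖H₁‖, ?_⟩
    rintro a ⟨v, ⟨-, hv⟩, rfl⟩
    have := habs H₁ v
    rw [hv] at this
    simp only [one_pow, mul_one] at this
    linarith [neg_abs_le ((inner ℂ v (H₁ v) : ℂ).re)]
  set m : ℝ := sInf SL with hm_def
  have hmH : m ≤ ‖H₁‖ := by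
    have h1 : m ≤ (inner ℂ u (H₁ u) : ℂ).re := csInf_le hbddSL ⟨u, ⟨huL, hu1⟩, rfl⟩
    have h2 := habs H₁ u
    rw [hu1] at h2
    simp only [one_pow, mul_one] at h2
    linarith [le_abs_self ((inner ℂ u (H₁ u) : ℂ).re)]
  -- Rayleigh lower bound on L, for arbitrary (not necessarily unit) vectors
  have hmL : ∀ s ∈ L, m * ‖s‖ ^ 2 ≤ (inner ℂ s (H₁ s) : ℂ).re := by
    intro s hs
    rcases eq_or_ne s 0 with rfl | hs0
    · simp
    · have hsn : (0:ℝ) < ‖s‖ := norm_pos_iff.mpr hs0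
      set w : V := (‖s‖⁻¹ : ℂ) • s with hw_def
      have hwL : w ∈ L := L.smul_mem _ hs
      have hw1 : ‖w‖ = 1 := by simp [hw_def, norm_smul, hsn.ne']
      have h1 : m ≤ (inner ℂ w (H₁ w) : ℂ).re := csInf_le hbddSL ⟨w, ⟨hwL, hw1⟩, rfl⟩
      have h2 : (inner ℂ w (H₁ w) : ℂ) = ((‖s‖⁻¹ ^ 2 : ℝ) : ℂ) * inner ℂ s (H₁ s) := by
        simp only [hw_def, map_smul, inner_smul_left, inner_smul_right]
        rw [map_inv₀, Complex.conj_ofReal]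
        push_cast
        ring
      have h3 : (inner ℂ w (H₁ w) : ℂ).re = ‖s‖⁻¹ ^ 2 * (inner ℂ s (H₁ s) : ℂ).re := by
        rw [h2, Complex.re_ofReal_mul]
      rw [h3] at h1
      have h4 : ‖s‖⁻¹ ^ 2 * (inner ℂ s (H₁ s) : ℂ).re * ‖s‖ ^ 2 = (inner ℂ s (H₁ s) : ℂ).re := by
        field_simp
      have h5 := mul_le_mul_of_nonneg_right h1 (sq_nonneg ‖s‖)
      linarith
  show sInf SA = sInf SL
  apply le_antisymm
  · -- SL ⊆ SA since H₂ vanishes on L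
    apply csInf_le_csInf hbddSA hneSL
    rintro a ⟨v, ⟨hvL, hv1⟩, rfl⟩
    exact ⟨v, ⟨trivial, hv1⟩, by
      simp [ContinuousLinearMap.add_apply, hker v hvL]⟩
  · apply le_csInf hneSA
    rintro a ⟨v, ⟨-, hv1⟩, rfl⟩
    obtain ⟨s, hs, t, ht, rfl⟩ := L.exists_add_mem_mem_orthogonal v
    have hst : (inner ℂ s t : ℂ) = 0 := Submodule.inner_right_of_mem_orthogonal hs ht
    have hnorm : ‖s‖ ^ 2 + ‖t‖ ^ 2 = 1 := by
      have := norm_add_sq_eq_norm_sq_add_norm_sq_of_inner_eq_zero s t hst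
      rw [hv1] at this
      rw [sq, sq]
      linarith
    have h1ts : (inner ℂ t (H₁ s) : ℂ) = 0 :=
      Submodule.inner_left_of_mem_orthogonal (hinv s hs) ht
    have h1st : (inner ℂ s (H₁ t) : ℂ) = 0 :=
      (hH₁.isSymmetric s t).symm.trans
        (Submodule.inner_right_of_mem_orthogonal (hinv s hs) ht)
    have h2st : (inner ℂ s (H₂ t) : ℂ) = 0 := by
      refine (hH₂.isSymmetric s t).symm.trans ?_
      show (inner ℂ (H₂ s) t : ℂ) = 0
      rw [hker s hs, inner_zero_left]
    have hexp : (inner ℂ (s + t) ((H₁ + H₂) (s + t)) : ℂ)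
        = inner ℂ s (H₁ s) + inner ℂ t (H₁ t) + inner ℂ t (H₂ t) := by
      simp only [ContinuousLinearMap.add_apply, map_add, inner_add_left, inner_add_right,
        hker s hs, inner_zero_right, h1ts, h1st, h2st]
      ring
    have hre : (inner ℂ (s + t) ((H₁ + H₂) (s + t)) : ℂ).re
        = (inner ℂ s (H₁ s) : ℂ).re + (inner ℂ t (H₁ t) : ℂ).re + (inner ℂ t (H₂ t) : ℂ).re := by
      rw [hexp]; simp
    show sInf SL ≤ (inner ℂ (s + t) ((H₁ + H₂) (s + t)) : ℂ).re
    rw [hre]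
    have hb1 := hmL s hs
    have hb2 : -(‖H₁‖ * ‖t‖ ^ 2) ≤ (inner ℂ t (H₁ t) : ℂ).re := by
      have := habs H₁ t
      linarith [neg_abs_le ((inner ℂ t (H₁ t) : ℂ).re)]
    have hb3 := hgap t ht
    have hmsum : m * ‖s‖ ^ 2 + m * ‖t‖ ^ 2 = m := by rw [← mul_add, hnorm, mul_one]
    have hc1 := mul_le_mul_of_nonneg_right hmH (sq_nonneg ‖t‖)
    have hc2 := mul_le_mul_of_nonneg_right hδ.le (sq_nonneg ‖t‖)
    linarith
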